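/- For two unrelated machines, if job i moving from machine a to machine b satisfies ℓ_b + 2p_{i,b} < ℓ_a + p_{i,a}, then the potential Φ(σ) = (ℓ_1 − ℓ_2)² + 3Σ_i p_{i,σ(i)}² strictly decreases; in fact Φ(σ') − Φ(σ) = 2(p_{i,a} + p_{i,b})·[(2p_{i,b} + ℓ_b) − (p_{i,a} + ℓ_a)]. -/

import Mathlib

/-- RANDOM policy on 2 unrelated machines. A better response move of
job `i` from machine `a = σ i` to machine `b` (i.e. `ℓ_b + 2 p_{i,b} < ℓ_a + p_{i,a}`)
strictly decreases the potential `Φ(σ) = (ℓ₁ − ℓ₂)² + 3 Σ_i p_{i,σ(i)}²`; in fact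
`Φ(σ') − Φ(σ) = 2 (p_{i,a} + p_{i,b}) ((2 p_{i,b} + ℓ_b) − (p_{i,a} + ℓ_a))`. -/
theorem random_two_unrelated_potential_decreases
    {n : ℕ} (p : Fin n → Fin 2 → ℝ) (hp : ∀ i j, 0 < p i j)
    (σ : Fin n → Fin 2) (i : Fin n) (b : Fin 2) (hb : b ≠ σ i)
    (load : (Fin n → Fin 2) → Fin 2 → ℝ)
    (hload : ∀ τ j, load τ j = ∑ i' ∈ Finset.univ.filter (fun i' => τ i' = j), p i' j)
    (Φ : (Fin n → Fin 2) → ℝ)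
    (hΦ : ∀ τ, Φ τ = (load τ 0 - load τ 1) ^ 2 + 3 * ∑ i', (p i' (τ i')) ^ 2)
    (hmove : load σ b + 2 * p i b < load σ (σ i) + p i (σ i)) :
    Φ (Function.update σ i b) - Φ σ =
      2 * (p i (σ i) + p i b) *
        ((2 * p i b + load σ b) - (p i (σ i) + load σ (σ i))) ∧
    Φ (Function.update σ i b) < Φ σ := by
  set σ' := Function.update σ i b with hσ'
  have hupd_i : σ' i = b := Function.update_self i b σ
  have hs : ∀ j, load σ' j =
      load σ j + ((if b = j then p i j else 0) - (if σ i = j then p i j else 0)) := by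
    intro j
    have h1 := Finset.sum_erase_add Finset.univ
      (fun x => if σ' x = j then p x j else 0) (Finset.mem_univ i)
    have h2 := Finset.sum_erase_add Finset.univ
      (fun x => if σ x = j then p x j else 0) (Finset.mem_univ i)
    have hcongr : ∑ x ∈ Finset.univ.erase i, (if σ' x = j then p x j else 0)
        = ∑ x ∈ Finset.univ.erase i, (if σ x = j then p x j else 0) := by
      refine Finset.sum_congr rfl fun x hx => ?_
      rw [hσ', Function.update_of_ne (Finset.ne_of_mem_erase hx)]
    rw [hload, hload, Finset.sum_filter, Finset.sum_filter, ← h1, ← h2, hcongr]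
    simp only [hupd_i]
    ring
  have hsq : ∑ i', p i' (σ' i') ^ 2
      = (∑ i', p i' (σ i') ^ 2) + p i b ^ 2 - p i (σ i) ^ 2 := by
    have h1 := Finset.sum_erase_add Finset.univ
      (fun x => p x (σ' x) ^ 2) (Finset.mem_univ i)
    have h2 := Finset.sum_erase_add Finset.univ
      (fun x => p x (σ x) ^ 2) (Finset.mem_univ i)
    have hcongr : ∑ x ∈ Finset.univ.erase i, p x (σ' x) ^ 2
        = ∑ x ∈ Finset.univ.erase i, p x (σ x) ^ 2 := by
      refine Finset.sum_congr rfl fun x hx => ?_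
      rw [hσ', Function.update_of_ne (Finset.ne_of_mem_erase hx)]
    rw [← h1, ← h2, hcongr, hupd_i]
    ring
  have h2f : ∀ x : Fin 2, x = 0 ∨ x = 1 := by decide
  have key : Φ σ' - Φ σ =
      2 * (p i (σ i) + p i b) *
        ((2 * p i b + load σ b) - (p i (σ i) + load σ (σ i))) := by
    rw [hΦ, hΦ, hsq, hs 0, hs 1]
    rcases h2f b with hbv | hbv <;> rcases h2f (σ i) with hav | hav <;>
      rw [hbv, hav] at hb ⊢ <;>
      first
        | exact absurd rfl hb
        | (norm_num; ring)
  refine ⟨key, ?_⟩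
  have hp1 := hp i (σ i)
  have hp2 := hp i b
  nlinarith [key, hmove]
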